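/- Let $p \ge 2$, $1 \le r \le p-1$, and $K > 0$. There is a constant $C$ (depending on $p, r, K$) such that for all $R \ge 2$ and all $w \ge 1$, the number of pairs $({\boldsymbol i}, {\boldsymbol i}')$ with ${\boldsymbol i}, {\boldsymbol i}' \in \{(i_1,\dots,i_p) \in \mathbb{N}^p : i_1 < \cdots < i_p \le w,\ i_1 \cdots i_p \le K R\}$ and $|\{i_1,\dots,i_p\} \cap \{i_1',\dots,i_p'\}| = r$ is at most $C R^2 (\log R)^{2(p-r-1)}$. -/

import Mathlib

open Finset

lemma harmonic_le (N : ℕ) : ∑ n ∈ Finset.Icc 1 N, (1 : ℝ)/n ≤ 1 + Real.log N := by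
  induction N with
  | zero => simp
  | succ N ih =>
    rcases Nat.eq_zero_or_pos N with h0 | hN
    · subst h0; norm_num
    rw [Finset.sum_Icc_succ_top (by omega)]
    have key : (1:ℝ)/(N+1) ≤ Real.log (N+1) - Real.log N := by
      have hx : (0:ℝ) < (N:ℝ)/(N+1) := by positivity
      have := Real.log_le_sub_one_of_pos hx
      rw [Real.log_div (by positivity) (by positivity)] at this
      have h1 : (N:ℝ)/(N+1) - 1 = -(1/(N+1)) := by field_simp; ring
      linarith [this, h1 ▸ this]
    push_cast
    linarith


lemma basel_le (M : ℕ) : ∑ n ∈ Finset.Icc 1 M, ((1 : ℝ)/n)^2 ≤ 2 := by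
  have key : ∀ M : ℕ, 1 ≤ M → ∑ n ∈ Finset.Icc 1 M, ((1 : ℝ)/n)^2 ≤ 2 - 1/M := by
    intro M hM
    induction M with
    | zero => omega
    | succ M ih =>
      rcases Nat.eq_zero_or_pos M with h0 | hM'
      · subst h0; norm_num
      have hM0 : (0:ℝ) < M := by exact_mod_cast hM'
      rw [Finset.sum_Icc_succ_top (by omega)]
      have h2 : ((1:ℝ)/((M:ℕ)+1))^2 ≤ 1/M - 1/(M+1) := by
        rw [div_sub_div _ _ (ne_of_gt hM0) (by positivity), div_pow, one_pow]
        have e1 : (1:ℝ)*((M:ℝ)+1) - M*1 = 1 := by ring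
        rw [e1]
        apply one_div_le_one_div_of_le (by positivity)
        nlinarith
      have := ih hM'
      push_cast at h2 ⊢
      linarith
  rcases Nat.eq_zero_or_pos M with h0 | hM
  · subst h0; simp
  · have := key M hM
    have : (0:ℝ) ≤ 1/M := by positivity
    linarith [key M hM]

lemma count_tuples : ∀ k : ℕ, 1 ≤ k → ∃ C : ℝ, 0 < C ∧ ∀ (M : ℕ) (X : ℝ), 1 ≤ X →
    (((Fintype.piFinset fun _ : Fin k => Finset.Icc 1 M).filter
        (fun f => ∏ j, (f j : ℝ) ≤ X)).card : ℝ)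
      ≤ C * X * (1 + Real.log X) ^ (k-1) := by
  intro k hk
  induction k, hk using Nat.le_induction with
  | base =>
    refine ⟨1, one_pos, fun M X hX => ?_⟩
    simp only [Nat.sub_self, pow_zero, mul_one, one_mul]
    have hcard : ((Fintype.piFinset fun _ : Fin 1 => Finset.Icc 1 M).filter
        (fun f => ∏ j, (f j : ℝ) ≤ X)).card ≤ (Finset.Icc 1 ⌊X⌋₊).card := by
      apply Finset.card_le_card_of_injOn (fun f => f 0)
      · intro f hf
        simp only [Finset.mem_coe, Finset.mem_filter, Fintype.mem_piFinset, Finset.mem_Icc] at hf ⊢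
        have h1 := (hf.1 0).1
        have h2 : (f 0 : ℝ) ≤ X := by
          have := hf.2
          rwa [Fin.prod_univ_one] at this
        exact ⟨h1, Nat.le_floor h2⟩
      · intro f hf g hg hfg
        funext j
        have : j = 0 := Subsingleton.elim j 0
        rw [this]; exact hfg
    calc (((Fintype.piFinset fun _ : Fin 1 => Finset.Icc 1 M).filter
        (fun f => ∏ j, (f j : ℝ) ≤ X)).card : ℝ)
        ≤ ((Finset.Icc 1 ⌊X⌋₊).card : ℝ) := by exact_mod_cast hcard
      _ ≤ X := by
          rw [Nat.card_Icc]
          simp only [Nat.add_sub_cancel]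
          exact (Nat.floor_le (by linarith)).trans_eq rfl
  | succ k hk ih =>
    obtain ⟨C, hC, hCb⟩ := ih
    refine ⟨C, hC, fun M X hX => ?_⟩
    have hX0 : (0:ℝ) < X := by linarith
    set s := (Fintype.piFinset fun _ : Fin (k+1) => Finset.Icc 1 M).filter
        (fun f => ∏ j, (f j : ℝ) ≤ X) with hs
    set t := Finset.Icc 1 (min M ⌊X⌋₊) with ht
    have hkey : ∀ f ∈ s, f 0 ∈ t := by
      intro f hf
      simp only [hs, Finset.mem_filter, Fintype.mem_piFinset, Finset.mem_Icc] at hf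
      have h1 := (hf.1 0).1
      have h2 : (f 0 : ℝ) ≤ X := by
        have hn : f 0 ≤ ∏ j, f j :=
          Finset.single_le_prod' (fun i _ => (hf.1 i).1) (Finset.mem_univ 0)
        calc (f 0 : ℝ) ≤ ((∏ j, f j : ℕ) : ℝ) := by exact_mod_cast hn
          _ = ∏ j, ((f j : ℝ)) := by push_cast; rfl
          _ ≤ X := hf.2
      simp only [ht, Finset.mem_Icc, le_min_iff]
      exact ⟨h1, (hf.1 0).2, Nat.le_floor h2⟩
    have hsum := Finset.card_eq_sum_card_fiberwise hkey
    have hfib : ∀ n ∈ t, ((s.filter fun f => f 0 = n).card : ℝ)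
        ≤ C * (X / n) * (1 + Real.log X) ^ (k-1) := by
      intro n hn
      simp only [ht, Finset.mem_Icc, le_min_iff] at hn
      have hn1 : 1 ≤ n := hn.1
      have hn0 : (0:ℝ) < n := by exact_mod_cast hn1
      have hn1' : (1:ℝ) ≤ n := by exact_mod_cast hn1
      have hnX : (n:ℝ) ≤ X := by
        have h' : (n:ℝ) ≤ (⌊X⌋₊ : ℝ) := by exact_mod_cast hn.2.2
        linarith [Nat.floor_le hX0.le]
      have hXn : 1 ≤ X / n := (one_le_div hn0).mpr hnX
      have hinj : ((s.filter fun f => f 0 = n).card : ℕ)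
          ≤ ((Fintype.piFinset fun _ : Fin k => Finset.Icc 1 M).filter
            (fun g => ∏ j, (g j : ℝ) ≤ X / n)).card := by
        apply Finset.card_le_card_of_injOn (fun f => f ∘ Fin.succ)
        · intro f hf
          simp only [Finset.mem_coe, Finset.mem_filter, hs, Fintype.mem_piFinset] at hf
          obtain ⟨⟨hpi, hprod⟩, h0⟩ := hf
          rw [Finset.mem_coe, Finset.mem_filter, Fintype.mem_piFinset]
          refine ⟨fun j => hpi j.succ, ?_⟩
          rw [Fin.prod_univ_succ, h0] at hprod
          rw [le_div_iff₀ hn0, mul_comm]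
          exact hprod
        · intro f hf g hg hfg
          simp only [Finset.mem_coe, Finset.mem_filter] at hf hg
          funext j
          refine Fin.cases ?_ ?_ j
          · rw [hf.2, hg.2]
          · intro i
            exact congrFun hfg i
      calc ((s.filter fun f => f 0 = n).card : ℝ)
          ≤ _ := by exact_mod_cast hinj
        _ ≤ C * (X / n) * (1 + Real.log (X/n)) ^ (k-1) := hCb M (X/n) hXn
        _ ≤ C * (X / n) * (1 + Real.log X) ^ (k-1) := by
            apply mul_le_mul_of_nonneg_left _ (by positivity)
            apply pow_le_pow_left₀ (by nlinarith [Real.log_nonneg hXn])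
            have : Real.log (X/n) ≤ Real.log X :=
              Real.log_le_log (by positivity) (by
                rw [div_le_iff₀ hn0]; nlinarith)
            linarith
    have hlog0 : 0 ≤ Real.log X := Real.log_nonneg hX
    have hsub : t ⊆ Finset.Icc 1 ⌊X⌋₊ := Finset.Icc_subset_Icc le_rfl (min_le_right _ _)
    have hfl1 : 1 ≤ ⌊X⌋₊ := Nat.le_floor (by exact_mod_cast hX)
    have hpowk : (1 + Real.log X)^(k-1) * (1 + Real.log X) = (1 + Real.log X)^k := by
      have hk1 : k - 1 + 1 = k := Nat.succ_pred_eq_of_pos hk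
      calc (1 + Real.log X)^(k-1) * (1 + Real.log X) = (1 + Real.log X)^(k-1+1) :=
            (pow_succ _ _).symm
        _ = (1 + Real.log X)^k := by rw [hk1]
    calc (s.card : ℝ) = ∑ n ∈ t, ((s.filter fun f => f 0 = n).card : ℝ) := by
          exact_mod_cast hsum
      _ ≤ ∑ n ∈ t, C * (X / n) * (1 + Real.log X) ^ (k-1) :=
          Finset.sum_le_sum hfib
      _ = C * X * (1 + Real.log X) ^ (k-1) * ∑ n ∈ t, (1:ℝ)/(n:ℝ) := by
          rw [Finset.mul_sum]; apply Finset.sum_congr rfl; intro n _; ring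
      _ ≤ C * X * (1 + Real.log X) ^ (k-1) * ∑ n ∈ Finset.Icc 1 ⌊X⌋₊, (1:ℝ)/(n:ℝ) := by
          apply mul_le_mul_of_nonneg_left _ (by positivity)
          apply Finset.sum_le_sum_of_subset_of_nonneg hsub
          intro n _ _; positivity
      _ ≤ C * X * (1 + Real.log X) ^ (k-1) * (1 + Real.log ⌊X⌋₊) := by
          apply mul_le_mul_of_nonneg_left (harmonic_le _) (by positivity)
      _ ≤ C * X * (1 + Real.log X) ^ (k-1) * (1 + Real.log X) := by
          apply mul_le_mul_of_nonneg_left _ (by positivity)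
          have : Real.log ⌊X⌋₊ ≤ Real.log X :=
            Real.log_le_log (by exact_mod_cast hfl1) (Nat.floor_le hX0.le)
          linarith
      _ = C * X * (1 + Real.log X) ^ (k+1-1) := by
          rw [Nat.add_sub_cancel, mul_assoc, hpowk]

noncomputable def enumF (s : Finset ℕ) (n : ℕ) : Fin n → ℕ :=
  if h : s.card = n then ⇑(s.orderEmbOfFin h) else fun _ => 0

lemma enumF_strictMono {s : Finset ℕ} {n : ℕ} (h : s.card = n) : StrictMono (enumF s n) := by
  rw [enumF, dif_pos h]; exact (s.orderEmbOfFin h).strictMono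

lemma enumF_range {s : Finset ℕ} {n : ℕ} (h : s.card = n) : Set.range (enumF s n) = ↑s := by
  rw [enumF, dif_pos h]; exact Finset.range_orderEmbOfFin s h

lemma enumF_image {s : Finset ℕ} {n : ℕ} (h : s.card = n) :
    Finset.image (enumF s n) Finset.univ = s := by
  apply Finset.coe_injective
  rw [Finset.coe_image, Finset.coe_univ, Set.image_univ, enumF_range h]

lemma enumF_mem {s : Finset ℕ} {n : ℕ} (h : s.card = n) (j : Fin n) : enumF s n j ∈ s := by
  have : enumF s n j ∈ Set.range (enumF s n) := Set.mem_range_self j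
  rw [enumF_range h] at this
  exact_mod_cast this

lemma prod_enumF (g : ℕ → ℝ) {s : Finset ℕ} {n : ℕ} (h : s.card = n) :
    ∏ x ∈ s, g x = ∏ j, g (enumF s n j) := by
  conv_lhs => rw [← enumF_image h]
  exact Finset.prod_image (fun a _ b _ hab => (enumF_strictMono h).injective hab)

lemma one_le_prodR {k : ℕ} (f : Fin k → ℕ) (h : ∀ j, 0 < f j) : (1:ℝ) ≤ ∏ j, (f j:ℝ) := by
  have h1 : 1 ≤ ∏ j, f j := Finset.one_le_prod' (fun j _ => h j)
  calc (1:ℝ) ≤ ((∏ j, f j : ℕ):ℝ) := by exact_mod_cast h1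
    _ = _ := by push_cast; rfl

lemma factor_le {p : ℕ} (q1 : Fin p → ℕ) (hpos : ∀ j, 0 < q1 j) (X : ℝ)
    (hprod : ∏ j, (q1 j : ℝ) ≤ X) (j₀ : Fin p) : (q1 j₀ : ℝ) ≤ X :=
  calc (q1 j₀ : ℝ) ≤ ((∏ j, q1 j : ℕ) : ℝ) := by
        exact_mod_cast Finset.single_le_prod' (fun i _ => hpos i) (Finset.mem_univ j₀)
    _ = ∏ j, (q1 j : ℝ) := by push_cast; rfl
    _ ≤ X := hprod

lemma split_facts {p r : ℕ} (hrp : r ≤ p) (q1 : Fin p → ℕ) (h1 : StrictMono q1)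
    (S : Finset ℕ) (hS : S ⊆ Finset.image q1 Finset.univ) (hScard : S.card = r) :
    ((Finset.image q1 Finset.univ \ S).card = p - r) ∧
    ((∏ j : Fin r, ((enumF S r j : ℕ) : ℝ)) *
      (∏ j : Fin (p - r), ((enumF (Finset.image q1 Finset.univ \ S) (p - r) j : ℕ) : ℝ))
      = ∏ j, ((q1 j : ℕ) : ℝ)) := by
  have hcard1 : (Finset.image q1 Finset.univ).card = p := by
    rw [Finset.card_image_of_injective _ h1.injective, Finset.card_univ, Fintype.card_fin]
  have hA : (Finset.image q1 Finset.univ \ S).card = p - r := by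
    rw [Finset.card_sdiff_of_subset hS, hcard1, hScard]
  refine ⟨hA, ?_⟩
  have h2 : ∏ j, ((q1 j : ℕ) : ℝ) = ∏ x ∈ Finset.image q1 Finset.univ, (x : ℝ) :=
    (Finset.prod_image (fun a _ b _ hab => h1.injective hab)).symm
  rw [h2, ← Finset.prod_sdiff hS, ← prod_enumF (fun x => (x:ℝ)) hScard,
    ← prod_enumF (fun x => (x:ℝ)) hA]
  ring


set_option maxHeartbeats 1000000 in
theorem pair_count_bound_sq (p r : ℕ) (hp : 2 ≤ p) (hr1 : 1 ≤ r)
    (hr2 : r ≤ p - 1) (K : ℝ) (hK : 0 < K) :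
    ∃ C : ℝ, 0 < C ∧ ∀ R : ℝ, 2 ≤ R → ∀ w : ℕ, 1 ≤ w →
      (Nat.card {q : (Fin p → ℕ) × (Fin p → ℕ) //
          StrictMono q.1 ∧ StrictMono q.2 ∧
          (∀ j, 0 < q.1 j ∧ q.1 j ≤ w) ∧ (∀ j, 0 < q.2 j ∧ q.2 j ≤ w) ∧
          (∏ j, (q.1 j : ℝ)) ≤ K * R ∧ (∏ j, (q.2 j : ℝ)) ≤ K * R ∧
          (Set.range q.1 ∩ Set.range q.2).ncard = r} : ℝ)
        ≤ C * R ^ 2 * (Real.log R) ^ (2 * (p - r - 1)) := by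
  have hrp : r ≤ p := by omega
  have hk1 : 1 ≤ p - r := by omega
  obtain ⟨C₀, hC₀, hC₀b⟩ := count_tuples (p - r) hk1
  have hlog2 : 0 < Real.log 2 := Real.log_pos one_lt_two
  set c : ℝ := 1 + (1 + |Real.log K|) / Real.log 2 with hc_def
  have hc : 1 ≤ c := by
    rw [hc_def]
    have : 0 ≤ (1 + |Real.log K|) / Real.log 2 := by positivity
    linarith
  have hc0 : 0 < c := by linarith
  refine ⟨C₀^2 * K^2 * 2^r * c^(2*(p-r-1)), by positivity, ?_⟩
  intro R hR w hw
  have hR0 : (0:ℝ) < R := by linarith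
  have hlogR : 0 < Real.log R := Real.log_pos (by linarith)
  by_cases hKR : K * R < 1
  · -- trivially empty
    have hempty : Nat.card {q : (Fin p → ℕ) × (Fin p → ℕ) //
          StrictMono q.1 ∧ StrictMono q.2 ∧
          (∀ j, 0 < q.1 j ∧ q.1 j ≤ w) ∧ (∀ j, 0 < q.2 j ∧ q.2 j ≤ w) ∧
          (∏ j, (q.1 j : ℝ)) ≤ K * R ∧ (∏ j, (q.2 j : ℝ)) ≤ K * R ∧
          (Set.range q.1 ∩ Set.range q.2).ncard = r} = 0 := by
      rw [Nat.card_eq_zero]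
      left
      constructor
      rintro ⟨⟨q1, q2⟩, h1, h2, h3, h4, h5, h6, h7⟩
      dsimp only at h3 h5
      have hge : (1:ℝ) ≤ ∏ j, (q1 j : ℝ) := one_le_prodR q1 (fun j => (h3 j).1)
      linarith
    rw [hempty]
    push_cast
    apply mul_nonneg (by positivity) (pow_nonneg hlogR.le _)
  · push_neg at hKR
    set M := ⌊K * R⌋₊ with hM
    set t : Finset (Fin r → ℕ) := (Fintype.piFinset fun _ : Fin r => Finset.Icc 1 M).filter
      (fun m => ∏ j, (m j:ℝ) ≤ K*R) with ht
    set T : Finset ((Fin r → ℕ) × (Fin (p-r) → ℕ) × (Fin (p-r) → ℕ)) :=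
      ((Fintype.piFinset fun _ : Fin r => Finset.Icc 1 M) ×ˢ
        (Fintype.piFinset fun _ : Fin (p-r) => Finset.Icc 1 M) ×ˢ
        (Fintype.piFinset fun _ : Fin (p-r) => Finset.Icc 1 M)).filter
        (fun z => (∏ j, (z.1 j:ℝ)) * (∏ j, (z.2.1 j:ℝ)) ≤ K*R ∧
          (∏ j, (z.1 j:ℝ)) * (∏ j, (z.2.2 j:ℝ)) ≤ K*R) with hT
    -- STEP A : injection
    have stepA : (Nat.card {q : (Fin p → ℕ) × (Fin p → ℕ) //
          StrictMono q.1 ∧ StrictMono q.2 ∧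
          (∀ j, 0 < q.1 j ∧ q.1 j ≤ w) ∧ (∀ j, 0 < q.2 j ∧ q.2 j ≤ w) ∧
          (∏ j, (q.1 j : ℝ)) ≤ K * R ∧ (∏ j, (q.2 j : ℝ)) ≤ K * R ∧
          (Set.range q.1 ∩ Set.range q.2).ncard = r}) ≤ T.card := by
      classical
      set Q := {q : (Fin p → ℕ) × (Fin p → ℕ) //
          StrictMono q.1 ∧ StrictMono q.2 ∧
          (∀ j, 0 < q.1 j ∧ q.1 j ≤ w) ∧ (∀ j, 0 < q.2 j ∧ q.2 j ≤ w) ∧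
          (∏ j, (q.1 j : ℝ)) ≤ K * R ∧ (∏ j, (q.2 j : ℝ)) ≤ K * R ∧
          (Set.range q.1 ∩ Set.range q.2).ncard = r} with hQ
      have hScard : ∀ q : Q,
          ((Finset.image q.1.1 Finset.univ) ∩ (Finset.image q.1.2 Finset.univ)).card = r := by
        rintro ⟨⟨q1, q2⟩, h1, h2, h3, h4, h5, h6, h7⟩
        dsimp only
        rw [← Set.ncard_coe_finset, Finset.coe_inter, Finset.coe_image, Finset.coe_image,
          Finset.coe_univ, Set.image_univ, Set.image_univ]
        exact h7
      have hQmem : ∀ q : Q,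
          (enumF ((Finset.image q.1.1 Finset.univ) ∩ (Finset.image q.1.2 Finset.univ)) r,
           enumF ((Finset.image q.1.1 Finset.univ) \
             ((Finset.image q.1.1 Finset.univ) ∩ (Finset.image q.1.2 Finset.univ))) (p-r),
           enumF ((Finset.image q.1.2 Finset.univ) \
             ((Finset.image q.1.1 Finset.univ) ∩ (Finset.image q.1.2 Finset.univ))) (p-r)) ∈ T := by
        intro q
        obtain ⟨⟨q1, q2⟩, h1, h2, h3, h4, h5, h6, h7⟩ := q
        have hSc := hScard ⟨(q1,q2), h1, h2, h3, h4, h5, h6, h7⟩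
        dsimp only at hSc ⊢
        set S := (Finset.image q1 Finset.univ) ∩ (Finset.image q2 Finset.univ) with hS
        obtain ⟨hAc, hprod1⟩ :=
          split_facts hrp q1 h1 S Finset.inter_subset_left hSc
        obtain ⟨hBc, hprod2⟩ :=
          split_facts hrp q2 h2 S Finset.inter_subset_right hSc
        have hmem1 : ∀ x ∈ Finset.image q1 Finset.univ, x ∈ Finset.Icc 1 M := by
          intro x hx
          obtain ⟨j₀, _, rfl⟩ := Finset.mem_image.mp hx
          exact Finset.mem_Icc.mpr ⟨(h3 j₀).1,
            Nat.le_floor (factor_le q1 (fun j => (h3 j).1) _ h5 j₀)⟩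
        have hmem2 : ∀ x ∈ Finset.image q2 Finset.univ, x ∈ Finset.Icc 1 M := by
          intro x hx
          obtain ⟨j₀, _, rfl⟩ := Finset.mem_image.mp hx
          exact Finset.mem_Icc.mpr ⟨(h4 j₀).1,
            Nat.le_floor (factor_le q2 (fun j => (h4 j).1) _ h6 j₀)⟩
        rw [hT, Finset.mem_filter, Finset.mem_product, Finset.mem_product]
        refine ⟨⟨?_, ?_, ?_⟩, ?_, ?_⟩
        · exact Fintype.mem_piFinset.mpr fun j =>
            hmem1 _ (Finset.inter_subset_left (enumF_mem hSc j))
        · exact Fintype.mem_piFinset.mpr fun j =>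
            hmem1 _ (Finset.sdiff_subset (enumF_mem hAc j))
        · exact Fintype.mem_piFinset.mpr fun j =>
            hmem2 _ (Finset.sdiff_subset (enumF_mem hBc j))
        · dsimp only
          rw [hprod1]; exact h5
        · dsimp only
          rw [hprod2]; exact h6
      have hinj : Function.Injective (fun q : Q => (⟨_, hQmem q⟩ : {z // z ∈ T})) := by
        intro q q' hqq
        simp only [Subtype.mk.injEq, Prod.mk.injEq] at hqq
        obtain ⟨em, ea, eb⟩ := hqq
        have hSc := hScard q
        have hSc' := hScard q'
        obtain ⟨hAc, -⟩ := split_facts hrp q.1.1 q.2.1 _ Finset.inter_subset_left hSc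
        obtain ⟨hBc, -⟩ := split_facts hrp q.1.2 q.2.2.1 _ Finset.inter_subset_right hSc
        obtain ⟨hAc', -⟩ := split_facts hrp q'.1.1 q'.2.1 _ Finset.inter_subset_left hSc'
        obtain ⟨hBc', -⟩ := split_facts hrp q'.1.2 q'.2.2.1 _ Finset.inter_subset_right hSc'
        have hSeq : (Finset.image q.1.1 Finset.univ) ∩ (Finset.image q.1.2 Finset.univ)
            = (Finset.image q'.1.1 Finset.univ) ∩ (Finset.image q'.1.2 Finset.univ) := by
          rw [← enumF_image hSc, em, enumF_image hSc']
        have hAeq : (Finset.image q.1.1 Finset.univ) \ ((Finset.image q.1.1 Finset.univ) ∩ (Finset.image q.1.2 Finset.univ))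
            = (Finset.image q'.1.1 Finset.univ) \ ((Finset.image q'.1.1 Finset.univ) ∩ (Finset.image q'.1.2 Finset.univ)) := by
          rw [← enumF_image hAc, ea, enumF_image hAc']
        have hBeq : (Finset.image q.1.2 Finset.univ) \ ((Finset.image q.1.1 Finset.univ) ∩ (Finset.image q.1.2 Finset.univ))
            = (Finset.image q'.1.2 Finset.univ) \ ((Finset.image q'.1.1 Finset.univ) ∩ (Finset.image q'.1.2 Finset.univ)) := by
          rw [← enumF_image hBc, eb, enumF_image hBc']
        have hR1 : Finset.image q.1.1 Finset.univ = Finset.image q'.1.1 Finset.univ := by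
          rw [← Finset.union_sdiff_of_subset (Finset.inter_subset_left :
              (Finset.image q.1.1 Finset.univ) ∩ (Finset.image q.1.2 Finset.univ) ⊆ _),
            hAeq, hSeq, Finset.union_sdiff_of_subset Finset.inter_subset_left]
        have hR2 : Finset.image q.1.2 Finset.univ = Finset.image q'.1.2 Finset.univ := by
          rw [← Finset.union_sdiff_of_subset (Finset.inter_subset_right :
              (Finset.image q.1.1 Finset.univ) ∩ (Finset.image q.1.2 Finset.univ) ⊆ _),
            hBeq, hSeq, Finset.union_sdiff_of_subset Finset.inter_subset_right]
        haveI hwf : WellFoundedLT (Fin p) := Finite.to_wellFoundedLT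
        have hq1 : q.1.1 = q'.1.1 := by
          refine (q.2.1.range_inj q'.2.1).mp ?_
          rw [← Set.image_univ, ← Finset.coe_univ, ← Finset.coe_image, hR1,
            Finset.coe_image, Finset.coe_univ, Set.image_univ]
        have hq2 : q.1.2 = q'.1.2 := by
          refine (q.2.2.1.range_inj q'.2.2.1).mp ?_
          rw [← Set.image_univ, ← Finset.coe_univ, ← Finset.coe_image, hR2,
            Finset.coe_image, Finset.coe_univ, Set.image_univ]
        exact Subtype.ext (Prod.ext hq1 hq2)
      have := Nat.card_le_card_of_injective _ hinj
      rwa [Nat.card_eq_finsetCard] at this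
    -- STEP B : counting T
    have hkeyT : ∀ z ∈ T, z.1 ∈ t := by
      intro z hz
      rw [hT, Finset.mem_filter, Finset.mem_product, Finset.mem_product] at hz
      obtain ⟨⟨hz1, hz2, hz3⟩, hc1, hc2⟩ := hz
      rw [ht, Finset.mem_filter]
      refine ⟨hz1, ?_⟩
      have h21 : (1:ℝ) ≤ ∏ j, (z.2.1 j:ℝ) := one_le_prodR _ (fun j =>
        (Finset.mem_Icc.mp (Fintype.mem_piFinset.mp hz2 j)).1)
      have hzge : (0:ℝ) ≤ ∏ j, (z.1 j:ℝ) := Finset.prod_nonneg (fun j _ => Nat.cast_nonneg _)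
      nlinarith [hc1]
    have hsumT := Finset.card_eq_sum_card_fiberwise hkeyT
    have hfibT : ∀ m ∈ t, ((T.filter fun z => z.1 = m).card : ℝ)
        ≤ (C₀ * ((K*R) / ∏ j, (m j:ℝ)) * (1 + Real.log (K*R))^(p-r-1))^2 := by
      intro m hm
      rw [ht, Finset.mem_filter] at hm
      obtain ⟨hm1, hm2⟩ := hm
      have hPm1 : (1:ℝ) ≤ ∏ j, (m j:ℝ) := one_le_prodR _ (fun j =>
        (Finset.mem_Icc.mp (Fintype.mem_piFinset.mp hm1 j)).1)
      have hPm0 : (0:ℝ) < ∏ j, (m j:ℝ) := by linarith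
      have hX1 : 1 ≤ (K*R) / ∏ j, (m j:ℝ) := (one_le_div hPm0).mpr hm2
      set Fm := (Fintype.piFinset fun _ : Fin (p-r) => Finset.Icc 1 M).filter
        (fun g => ∏ j, (g j:ℝ) ≤ (K*R) / ∏ j, (m j:ℝ)) with hFm
      have hcardfib : (T.filter fun z => z.1 = m).card ≤ (Fm ×ˢ Fm).card := by
        apply Finset.card_le_card_of_injOn (fun z => (z.2.1, z.2.2))
        · intro z hz
          rw [Finset.mem_coe, Finset.mem_filter, hT, Finset.mem_filter, Finset.mem_product,
            Finset.mem_product] at hz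
          obtain ⟨⟨⟨hz1, hz2, hz3⟩, hc1, hc2⟩, hzm⟩ := hz
          rw [Finset.mem_coe, Finset.mem_product]
          rw [hzm] at hc1 hc2
          constructor
          · rw [hFm, Finset.mem_filter]
            exact ⟨hz2, (le_div_iff₀ hPm0).mpr (by rw [mul_comm]; exact hc1)⟩
          · rw [hFm, Finset.mem_filter]
            exact ⟨hz3, (le_div_iff₀ hPm0).mpr (by rw [mul_comm]; exact hc2)⟩
        · intro z hz z' hz' hzz
          simp only [Finset.mem_coe, Finset.mem_filter] at hz hz'
          simp only [Prod.mk.injEq] at hzz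
          have e1 : z.1 = z'.1 := by rw [hz.2, hz'.2]
          exact Prod.ext e1 (Prod.ext hzz.1 hzz.2)
      have hFmb2 : (Fm.card : ℝ)
          ≤ C₀ * ((K*R)/∏ j, (m j:ℝ)) * (1 + Real.log (K*R))^(p-r-1) := by
        refine (hC₀b M _ hX1).trans (mul_le_mul_of_nonneg_left ?_ (by positivity))
        apply pow_le_pow_left₀ (by nlinarith [Real.log_nonneg hX1])
        have : Real.log ((K*R)/∏ j, (m j:ℝ)) ≤ Real.log (K*R) :=
          Real.log_le_log (by positivity) (div_le_self (by linarith) hPm1)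
        linarith
      calc ((T.filter fun z => z.1 = m).card : ℝ) ≤ ((Fm ×ˢ Fm).card : ℝ) := by
            exact_mod_cast hcardfib
        _ = (Fm.card : ℝ)^2 := by rw [Finset.card_product]; push_cast; ring
        _ ≤ (C₀ * ((K*R)/∏ j, (m j:ℝ)) * (1 + Real.log (K*R))^(p-r-1))^2 :=
            pow_le_pow_left₀ (Nat.cast_nonneg _) hFmb2 2
    have hL0 : (0:ℝ) ≤ 1 + Real.log (K*R) := by
      have := Real.log_nonneg hKR; linarith
    have stepB : (T.card : ℝ)
        ≤ C₀^2 * (K*R)^2 * (1 + Real.log (K*R))^(2*(p-r-1)) * 2^r := by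
      have e2 : ((1 + Real.log (K*R))^(p-r-1))^2 = (1 + Real.log (K*R))^(2*(p-r-1)) := by
        rw [← pow_mul, Nat.mul_comm]
      calc (T.card : ℝ) = ∑ m ∈ t, ((T.filter fun z => z.1 = m).card : ℝ) := by
            exact_mod_cast hsumT
        _ ≤ ∑ m ∈ t, (C₀ * ((K*R)/∏ j, (m j:ℝ)) * (1 + Real.log (K*R))^(p-r-1))^2 :=
            Finset.sum_le_sum hfibT
        _ = C₀^2 * (K*R)^2 * (1 + Real.log (K*R))^(2*(p-r-1)) *
              ∑ m ∈ t, ∏ j, ((1:ℝ)/(m j))^2 := by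
            rw [Finset.mul_sum]
            apply Finset.sum_congr rfl
            intro m hm
            have e1 : ∏ j, ((1:ℝ)/(m j))^2 = ((1:ℝ)/∏ j, (m j:ℝ))^2 := by
              rw [Finset.prod_pow, Finset.prod_div_distrib, Finset.prod_const_one]
            rw [e1, ← e2]
            ring
        _ ≤ C₀^2 * (K*R)^2 * (1 + Real.log (K*R))^(2*(p-r-1)) * 2^r := by
            apply mul_le_mul_of_nonneg_left _
              (mul_nonneg (mul_nonneg (by positivity) (by positivity)) (pow_nonneg hL0 _))
            calc ∑ m ∈ t, ∏ j, ((1:ℝ)/(m j))^2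
                ≤ ∑ m ∈ Fintype.piFinset (fun _ : Fin r => Finset.Icc 1 M),
                    ∏ j, ((1:ℝ)/(m j))^2 := by
                  apply Finset.sum_le_sum_of_subset_of_nonneg
                  · rw [ht]; exact Finset.filter_subset _ _
                  · intro m _ _
                    exact Finset.prod_nonneg (fun j _ => by positivity)
              _ = ∏ _j : Fin r, ∑ n ∈ Finset.Icc 1 M, ((1:ℝ)/n)^2 :=
                  (Finset.prod_univ_sum (fun _ : Fin r => Finset.Icc 1 M)
                    (fun _ n => ((1:ℝ)/(n:ℕ))^2)).symm
              _ ≤ ∏ _j : Fin r, (2:ℝ) :=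
                  Finset.prod_le_prod
                    (fun j _ => Finset.sum_nonneg (fun n _ => by positivity))
                    (fun j _ => basel_le M)
              _ = 2^r := by rw [Finset.prod_const, Finset.card_univ, Fintype.card_fin]
    -- combine
    have hLc : 1 + Real.log (K*R) ≤ c * Real.log R := by
      have f1 : Real.log 2 ≤ Real.log R := Real.log_le_log two_pos hR
      have f2 : Real.log K ≤ |Real.log K| := le_abs_self _
      have f3 : 1 ≤ Real.log R / Real.log 2 := (one_le_div hlog2).mpr f1
      have f4 : |Real.log K| ≤ |Real.log K| * (Real.log R / Real.log 2) :=
        le_mul_of_one_le_right (abs_nonneg _) f3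
      have hexp : c * Real.log R
          = Real.log R + (1 + |Real.log K|) * (Real.log R / Real.log 2) := by
        rw [hc_def]; field_simp
      rw [Real.log_mul (ne_of_gt hK) (ne_of_gt hR0), hexp]
      nlinarith
    calc (Nat.card {q : (Fin p → ℕ) × (Fin p → ℕ) //
          StrictMono q.1 ∧ StrictMono q.2 ∧
          (∀ j, 0 < q.1 j ∧ q.1 j ≤ w) ∧ (∀ j, 0 < q.2 j ∧ q.2 j ≤ w) ∧
          (∏ j, (q.1 j : ℝ)) ≤ K * R ∧ (∏ j, (q.2 j : ℝ)) ≤ K * R ∧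
          (Set.range q.1 ∩ Set.range q.2).ncard = r} : ℝ) ≤ (T.card : ℝ) := by
          exact_mod_cast stepA
      _ ≤ C₀^2 * (K*R)^2 * (1 + Real.log (K*R))^(2*(p-r-1)) * 2^r := stepB
      _ ≤ C₀^2 * (K*R)^2 * (c * Real.log R)^(2*(p-r-1)) * 2^r := by
          apply mul_le_mul_of_nonneg_right _ (by positivity)
          exact mul_le_mul_of_nonneg_left (pow_le_pow_left₀ hL0 hLc _) (by positivity)
      _ = (C₀^2 * K^2 * 2^r * c^(2*(p-r-1))) * R^2 * (Real.log R)^(2*(p-r-1)) := by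
          rw [mul_pow c (Real.log R), mul_pow K R]
          ring
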